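/- With M = C^{d×d}, delta-form δ(x) = d·tr(xσ), and orthonormal basis B of L²(M), the adjoint of the multiplication map m: L²(M)⊗L²(M) → L²(M) is given by m*(x) = Σ_{y ∈ B} y ⊗ (y* x). -/

import Mathlib

open scoped ComplexOrder TensorProduct

/-- Auxiliary: an additive map sends finite sums to sums. -/
lemma stmt2_aux_sum {V : Type*} [AddCommGroup V] (g : V → ℂ)
    (hg : ∀ u v, g (u + v) = g u + g v)
    {κ : Type*} (s : Finset κ) (f : κ → V) :
    g (∑ i ∈ s, f i) = ∑ i ∈ s, g (f i) := by
  have h0 : g 0 = 0 := by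
    have := hg 0 0
    simp only [add_zero] at this
    exact (left_eq_add.mp this)
  induction s using Finset.cons_induction with
  | empty => simpa using h0
  | cons a s' hni ih => rw [Finset.sum_cons, hg, ih, Finset.sum_cons]

/-- With `M = ℂ^{d×d}`, delta-form `δ(x) = d·tr(xσ)` and an orthonormal
basis `b` of `L²(M)`, the adjoint of the multiplication map satisfies
`m*(x) = ∑_{y ∈ B} y ⊗ (y* x)`. -/

theorem stmt2 (d : ℕ) (hd : 0 < d)
    (σ : Matrix (Fin d) (Fin d) ℂ) (hσ : σ.PosDef)
    (htr : (σ⁻¹).trace = (d : ℂ))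
    (ip : Matrix (Fin d) (Fin d) ℂ → Matrix (Fin d) (Fin d) ℂ → ℂ)
    (hip : ∀ x y, ip x y = (d : ℂ) * ((star y) * x * σ).trace)
    -- an orthonormal basis of L²(M)
    {ι : Type*} [Fintype ι] [DecidableEq ι] (b : ι → Matrix (Fin d) (Fin d) ℂ)
    (honb : ∀ i j, ip (b i) (b j) = if i = j then 1 else 0)
    (hspan : Submodule.span ℂ (Set.range b) = ⊤)
    -- the tensor product inner product on L²(M ⊗ M)
    (ip2 : (Matrix (Fin d) (Fin d) ℂ ⊗[ℂ] Matrix (Fin d) (Fin d) ℂ) →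
      (Matrix (Fin d) (Fin d) ℂ ⊗[ℂ] Matrix (Fin d) (Fin d) ℂ) → ℂ)
    (hip2₁ : ∀ u v w, ip2 (u + v) w = ip2 u w + ip2 v w)
    (hip2₂ : ∀ u v w, ip2 u (v + w) = ip2 u v + ip2 u w)
    (hip2t : ∀ x y z t, ip2 (x ⊗ₜ[ℂ] y) (z ⊗ₜ[ℂ] t) = ip x z * ip y t)
    -- `m*`, the adjoint of the multiplication map `m = LinearMap.mul'`
    (mstar : Matrix (Fin d) (Fin d) ℂ →ₗ[ℂ]
      Matrix (Fin d) (Fin d) ℂ ⊗[ℂ] Matrix (Fin d) (Fin d) ℂ)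
    (hadj : ∀ x ξ, ip2 (mstar x) ξ =
      ip x (LinearMap.mul' ℂ (Matrix (Fin d) (Fin d) ℂ) ξ)) :
    ∀ x, mstar x = ∑ i, (b i) ⊗ₜ[ℂ] ((star (b i)) * x) := by
  classical
  intro x
  -- ip is linear in the first variable
  have hadd : ∀ x y z, ip (x + y) z = ip x z + ip y z := by
    intro x y z
    simp [hip, Matrix.mul_add, Matrix.add_mul, mul_add]
  have hsmul : ∀ (c : ℂ) x z, ip (c • x) z = c * ip x z := by
    intro c x z
    simp [hip, Matrix.mul_smul, Matrix.smul_mul]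
    ring
  -- ip as a linear map in the first variable
  let ipL : Matrix (Fin d) (Fin d) ℂ → Matrix (Fin d) (Fin d) ℂ →ₗ[ℂ] ℂ := fun z =>
    { toFun := fun x => ip x z
      map_add' := fun x y => hadd x y z
      map_smul' := fun c x => hsmul c x z }
  have hipL : ∀ x z, ipL z x = ip x z := fun _ _ => rfl
  -- b is linearly independent
  have hli : LinearIndependent ℂ b := by
    rw [linearIndependent_iff']
    intro s g hg i hi
    have h1 : ipL (b i) (∑ j ∈ s, g j • b j) = 0 := by rw [hg]; simp
    rw [map_sum] at h1
    simp only [hipL, hsmul, honb] at h1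
    rw [Finset.sum_eq_single i] at h1
    · simpa using h1
    · intro j hj hji; simp [hji]
    · intro h; exact absurd hi h
  let B : Module.Basis ι ℂ (Matrix (Fin d) (Fin d) ℂ) := Module.Basis.mk hli hspan.ge
  have hB : ∀ i, B i = b i := fun i => Module.Basis.mk_apply hli _ i
  let BT := Module.Basis.tensorProduct B B
  have hBT : ∀ p : ι × ι, BT p = b p.1 ⊗ₜ[ℂ] b p.2 := fun p => by
    simp [BT, Module.Basis.tensorProduct_apply', hB]
  -- ip2 additive facts
  have h0 : ∀ w, ip2 0 w = 0 := by
    intro w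
    have := hip2₁ 0 0 w
    simp only [add_zero] at this
    exact (left_eq_add.mp this)
  -- coordinates via ip2
  have hcoord : ∀ (u : Matrix (Fin d) (Fin d) ℂ ⊗[ℂ] Matrix (Fin d) (Fin d) ℂ) (k l : ι),
      ip2 u (b k ⊗ₜ[ℂ] b l) = BT.repr u (k, l) := by
    intro u k l
    conv_lhs => rw [← BT.sum_repr u]
    rw [stmt2_aux_sum (fun u => ip2 u (b k ⊗ₜ[ℂ] b l)) (fun u v => hip2₁ u v _)]
    have hterm : ∀ p : ι × ι,
        ip2 (BT.repr u p • BT p) (b k ⊗ₜ[ℂ] b l)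
          = if p = (k, l) then BT.repr u p else 0 := by
      intro p
      rw [hBT, TensorProduct.smul_tmul', hip2t, hsmul, honb, honb]
      by_cases h1 : p.1 = k <;> by_cases h2 : p.2 = l <;>
        simp [h1, h2, Prod.ext_iff]
    simp only [hterm]
    simp
  -- the two sides have equal ip2 against basis vectors
  have key : ∀ k l : ι,
      ip2 (mstar x) (b k ⊗ₜ[ℂ] b l)
        = ip2 (∑ i, (b i) ⊗ₜ[ℂ] ((star (b i)) * x)) (b k ⊗ₜ[ℂ] b l) := by
    intro k l
    rw [hadj, LinearMap.mul'_apply,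
      stmt2_aux_sum (fun u => ip2 u (b k ⊗ₜ[ℂ] b l)) (fun u v => hip2₁ u v _)]
    simp only [hip2t, honb]
    rw [Finset.sum_eq_single k]
    · simp only [if_pos rfl, one_mul]
      rw [hip, hip, star_mul]
      rw [mul_assoc (star (b l)) (star (b k)) x]
      simp
    · intro j hj hjk; simp [hjk]
    · simp
  have hrepr : BT.repr (mstar x) = BT.repr (∑ i, (b i) ⊗ₜ[ℂ] ((star (b i)) * x)) := by
    ext p
    obtain ⟨k, l⟩ := p
    rw [← hcoord, ← hcoord, key]
  exact BT.repr.injective hrepr
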